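/- Let T be a finite type, let X be a type, let A : X → Finset T, and let (D_n)_{n≥1} be a sequence of probability mass functions on X. For every ε, δ ∈ (0,1) there exist n₀ ∈ ℕ and m ∈ ℕ such that, drawing m independent samples from each of D_1, …, D_{n₀} (independently across distributions) and letting Â ⊆ T be the union of A(x) over all drawn samples x, with probability at least 1 − δ the following holds: for every n ≥ n₀, Pr_{x∼D_n}[A(x) ⊆ Â] > 1 − ε. -/

import Mathlib

open scoped ENNReal Classical

lemma tsum_pi_prod {α : Type*} (n : ℕ) (f : Fin n → α → ℝ≥0∞) :
    ∑' g : Fin n → α, ∏ i, f i (g i) = ∏ i, ∑' x, f i x := by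
  induction n with
  | zero =>
      rw [tsum_eq_single (fun i => i.elim0) (by intro b hb; exact absurd (Subsingleton.elim b _) hb)]
      simp
  | succ n ih =>
      rw [← (Fin.consEquiv (fun _ : Fin (n+1) => α)).tsum_eq]
      have key : ∀ p : α × (Fin n → α),
          (∏ i, f i ((Fin.consEquiv (fun _ : Fin (n+1) => α)) p i))
            = f 0 p.1 * ∏ i : Fin n, f i.succ (p.2 i) := by
        rintro ⟨x, g⟩
        rw [Fin.prod_univ_succ]
        simp [Fin.consEquiv]
      calc ∑' p : α × (Fin n → α), ∏ i, f i ((Fin.consEquiv fun _ => α) p i)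
          = ∑' (x : α) (g : Fin n → α), f 0 x * ∏ i : Fin n, f i.succ (g i) := by
            rw [ENNReal.tsum_prod']; simp only [key]
        _ = (∑' x, f 0 x) * ∏ i : Fin n, ∑' x, f i.succ x := by
            simp_rw [ENNReal.tsum_mul_left, ih fun i => f i.succ, ENNReal.tsum_mul_right]
        _ = ∏ i, ∑' x, f i x := (Fin.prod_univ_succ fun i => ∑' x, f i x).symm

lemma tsum_pi1_prod {α : Type*} (n : ℕ) (f : Fin n → α → ℝ≥0∞) :
    ∑' g : Fin n → Fin 1 → α, ∏ i, ∏ j, f i (g i j) = ∏ i, ∑' x, f i x := by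
  rw [tsum_pi_prod n (fun i (g : Fin 1 → α) => ∏ j, f i (g j))]
  refine Finset.prod_congr rfl fun i _ => ?_
  rw [← (Equiv.funUnique (Fin 1) α).tsum_eq (fun x => f i x)]
  simp

/-- Coverage lemma from the proof of Theorem 2: for every `ε, δ ∈ (0,1)` there are `n₀` and `m`
such that, drawing `m` independent samples from each of `D_1, …, D_{n₀}` and letting `Â` be the
union of the visited sets `A x` over all drawn samples `x`, with probability at least `1 - δ`
it holds that for every `n ≥ n₀`, `Pr_{x ∼ D_n}[A x ⊆ Â] > 1 - ε`. -/
theorem training_covers_visited_sets {T X : Type*} [Fintype T] [DecidableEq T]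
    (A : X → Finset T) (D : ℕ → PMF X)
    (ε δ : ℝ) (hε : ε ∈ Set.Ioo (0 : ℝ) 1) (hδ : δ ∈ Set.Ioo (0 : ℝ) 1) :
    ∃ n₀ m : ℕ,
      ENNReal.ofReal (1 - δ) ≤
        ∑' xs : Fin n₀ → Fin m → X,
          if ∀ n ≥ n₀, ENNReal.ofReal (1 - ε) <
              ∑' x, if A x ⊆ Finset.univ.biUnion
                  (fun i : Fin n₀ => Finset.univ.biUnion fun j : Fin m => A (xs i j))
                then D n x else 0
          then ∏ i, ∏ j, D (i.1 + 1) (xs i j) else 0 := by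
  obtain ⟨hε0, hε1⟩ := hε
  obtain ⟨hδ0, hδ1⟩ := hδ
  set k := Fintype.card T with hk
  set c : ℝ := ε / (k + 1) with hcdef
  have hkpos : (0:ℝ) ≤ k := Nat.cast_nonneg k
  have hc0 : 0 < c := by positivity
  have hc1 : c < 1 := by
    have : c ≤ ε := by
      rw [hcdef, div_le_iff₀ (by positivity)]
      nlinarith
    linarith
  set c' : ℝ≥0∞ := ENNReal.ofReal c with hc'def
  set p : ℕ → T → ℝ≥0∞ := fun n t => ∑' x, if t ∈ A x then D n x else 0 with hpdef
  have hple : ∀ n t, p n t ≤ 1 := by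
    intro n t
    calc p n t ≤ ∑' x, D n x := by
          refine Summable.tsum_le_tsum (fun x => ?_) ENNReal.summable ENNReal.summable
          split <;> simp
      _ = 1 := (D n).tsum_coe
  set S : Set T := {t | {n : ℕ | c' ≤ p (n + 1) t}.Infinite} with hSdef
  -- choose thresholds for non-persistent symbols
  have hNex : ∀ t : T, ∃ Nt : ℕ, t ∉ S → ∀ n, Nt ≤ n → p (n + 1) t < c' := by
    intro t
    by_cases h : t ∈ S
    · exact ⟨0, fun ht => absurd h ht⟩
    · have hfin : {n : ℕ | c' ≤ p (n + 1) t}.Finite := Set.not_infinite.mp h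
      obtain ⟨b, hb⟩ := hfin.bddAbove
      refine ⟨b + 1, fun _ n hn => ?_⟩
      by_contra hcon
      have hmem : n ∈ {n : ℕ | c' ≤ p (n + 1) t} := not_lt.mp hcon
      have := hb hmem
      omega
  choose N hN using hNex
  -- choose K with (1-c)^K < δ/(k+1)
  obtain ⟨K, hK⟩ : ∃ K : ℕ, (1 - c) ^ K < δ / (k + 1) :=
    exists_pow_lt_of_lt_one (by positivity) (by linarith)
  -- choose K hit-times for persistent symbols
  have hFex : ∀ t : T, ∃ Ft : Finset ℕ,
      t ∈ S → (↑Ft ⊆ {n : ℕ | c' ≤ p (n + 1) t} ∧ Ft.card = K) := by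
    intro t
    by_cases h : t ∈ S
    · obtain ⟨Ft, h1, h2⟩ := Set.Infinite.exists_subset_card_eq h K
      exact ⟨Ft, fun _ => ⟨h1, h2⟩⟩
    · exact ⟨∅, fun h' => absurd h' h⟩
  choose F hF using hFex
  set n₀ : ℕ := max ((Finset.univ.sup N) + 1) ((Finset.univ.sup fun t => (F t).sup id) + 1)
    with hn₀def
  refine ⟨n₀, 1, ?_⟩
  set Ahat : (Fin n₀ → Fin 1 → X) → Finset T := fun xs =>
    Finset.univ.biUnion (fun i : Fin n₀ => Finset.univ.biUnion fun j : Fin 1 => A (xs i j))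
    with hAhatdef
  set W : (Fin n₀ → Fin 1 → X) → ℝ≥0∞ := fun xs => ∏ i, ∏ j, (D (i.1 + 1) (xs i j) : ℝ≥0∞)
    with hWdef
  show ENNReal.ofReal (1 - δ) ≤
      ∑' xs : Fin n₀ → Fin 1 → X,
        if ∀ n ≥ n₀, ENNReal.ofReal (1 - ε) <
            ∑' x, if A x ⊆ Ahat xs then D n x else 0
        then W xs else 0
  -- total mass is 1
  have htot : ∑' xs : Fin n₀ → Fin 1 → X, W xs = 1 := by
    rw [hWdef, tsum_pi1_prod n₀ (fun i x => (D (i.1 + 1) x : ℝ≥0∞))]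
    simp [PMF.tsum_coe]
  -- Claim 1 : coverage of S implies goodness
  have claim1 : ∀ xs : Fin n₀ → Fin 1 → X, (∀ t ∈ S, t ∈ Ahat xs) →
      ∀ n ≥ n₀, ENNReal.ofReal (1 - ε) <
        ∑' x, if A x ⊆ Ahat xs then D n x else 0 := by
    intro xs hcov n hn
    set P := ∑' x, if A x ⊆ Ahat xs then (D n x : ℝ≥0∞) else 0 with hP
    set Q := ∑' x, if ¬ A x ⊆ Ahat xs then (D n x : ℝ≥0∞) else 0 with hQ
    have hPQ : P + Q = 1 := by
      rw [hP, hQ, ← ENNReal.tsum_add, ← (D n).tsum_coe]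
      exact tsum_congr fun x => by by_cases h : A x ⊆ Ahat xs <;> simp [h]
    have hQbound : Q < ENNReal.ofReal ε := by
      have hQle : Q ≤ ∑ t ∈ Finset.univ.filter (fun t : T => t ∉ S), p n t := by
        calc Q ≤ ∑' x, ∑ t ∈ Finset.univ.filter (fun t : T => t ∉ S),
                  (if t ∈ A x then (D n x : ℝ≥0∞) else 0) := by
              refine Summable.tsum_le_tsum (fun x => ?_) ENNReal.summable ENNReal.summable
              by_cases hsub : A x ⊆ Ahat xs
              · simp [hsub]
              · obtain ⟨t, htA, htnotin⟩ := Finset.not_subset.mp hsub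
                have htS : t ∉ S := fun hts => htnotin (hcov t hts)
                have hle : (fun t => if t ∈ A x then (D n x : ℝ≥0∞) else 0) t
                    ≤ ∑ t ∈ Finset.univ.filter (fun t : T => t ∉ S),
                        (if t ∈ A x then (D n x : ℝ≥0∞) else 0) :=
                  Finset.single_le_sum (f := fun t => if t ∈ A x then (D n x : ℝ≥0∞) else 0)
                    (fun _ _ => zero_le) (by simp [htS])
                simpa [hsub, htA] using hle
          _ = ∑ t ∈ Finset.univ.filter (fun t : T => t ∉ S), p n t := by
              simp only [hpdef]
              exact Summable.tsum_finsetSum (fun _ _ => ENNReal.summable)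
      have hsmall : ∀ t ∈ Finset.univ.filter (fun t : T => t ∉ S), p n t ≤ c' := by
        intro t ht
        have htS : t ∉ S := by simpa using ht
        have hn1 : 1 ≤ n := le_trans (le_trans (by omega) (le_max_left _ _)) hn
        have hNt : N t ≤ n - 1 := by
          have h1 : N t ≤ Finset.univ.sup N := Finset.le_sup (Finset.mem_univ t)
          have hge : Finset.univ.sup N + 1 ≤ n := le_trans (le_max_left _ _) hn
          omega
        have hlt := hN t htS (n - 1) hNt
        rw [show n - 1 + 1 = n by omega] at hlt
        exact hlt.le
      have hcard : (Finset.univ.filter (fun t : T => t ∉ S)).card ≤ k := by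
        simpa using Finset.card_filter_le Finset.univ (fun t : T => t ∉ S)
      calc Q ≤ ∑ t ∈ Finset.univ.filter (fun t : T => t ∉ S), p n t := hQle
        _ ≤ (Finset.univ.filter (fun t : T => t ∉ S)).card • c' :=
            Finset.sum_le_card_nsmul _ _ _ hsmall
        _ ≤ (k : ℝ≥0∞) * c' := by
            rw [nsmul_eq_mul]
            exact mul_le_mul_left (by exact_mod_cast hcard) c'
        _ = ENNReal.ofReal (k * c) := by
            rw [ENNReal.ofReal_mul (by positivity)]
            simp [hc'def]
        _ < ENNReal.ofReal ε := by
            refine (ENNReal.ofReal_lt_ofReal_iff hε0).mpr ?_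
            rw [hcdef]
            calc (k : ℝ) * (ε / (k + 1)) = ε * (k / (k + 1)) := by ring
              _ < ε * 1 := by
                  refine mul_lt_mul_of_pos_left ?_ hε0
                  rw [div_lt_one (by positivity)]
                  linarith
              _ = ε := mul_one ε
    have h1 : ENNReal.ofReal (1 - ε) + Q < P + Q := by
      calc ENNReal.ofReal (1 - ε) + Q
          < ENNReal.ofReal (1 - ε) + ENNReal.ofReal ε :=
            ENNReal.add_lt_add_left (by simp) hQbound
        _ = ENNReal.ofReal 1 := by
            rw [← ENNReal.ofReal_add (by linarith) (by linarith)]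
            norm_num
        _ = P + Q := by rw [ENNReal.ofReal_one, hPQ]
    exact lt_of_add_lt_add_right h1
  -- reduce to coverage probability
  have hmono : ∑' xs : Fin n₀ → Fin 1 → X, (if ∀ t ∈ S, t ∈ Ahat xs then W xs else 0) ≤
      ∑' xs : Fin n₀ → Fin 1 → X,
        (if ∀ n ≥ n₀, ENNReal.ofReal (1 - ε) <
            ∑' x, if A x ⊆ Ahat xs then D n x else 0 then W xs else 0) := by
    refine Summable.tsum_le_tsum (fun xs => ?_) ENNReal.summable ENNReal.summable
    by_cases h : ∀ t ∈ S, t ∈ Ahat xs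
    · rw [if_pos h, if_pos (claim1 xs h)]
    · rw [if_neg h]
      exact zero_le
  -- bound the probability of non-coverage
  have hbad : ∑' xs : Fin n₀ → Fin 1 → X, (if ¬ ∀ t ∈ S, t ∈ Ahat xs then W xs else 0)
      ≤ ENNReal.ofReal δ := by
    have hstep1 : ∑' xs : Fin n₀ → Fin 1 → X, (if ¬ ∀ t ∈ S, t ∈ Ahat xs then W xs else 0)
        ≤ ∑ t ∈ Finset.univ.filter (fun t : T => t ∈ S),
            ∑' xs : Fin n₀ → Fin 1 → X, (if t ∉ Ahat xs then W xs else 0) := by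
      rw [← Summable.tsum_finsetSum (fun _ _ => ENNReal.summable)]
      refine Summable.tsum_le_tsum (fun xs => ?_) ENNReal.summable ENNReal.summable
      by_cases h : ∀ t ∈ S, t ∈ Ahat xs
      · rw [if_neg (not_not_intro h)]
        exact zero_le
      · push_neg at h
        obtain ⟨t, htS, htnot⟩ := h
        have hle : (fun t => if t ∉ Ahat xs then W xs else 0) t
            ≤ ∑ t ∈ Finset.univ.filter (fun t : T => t ∈ S),
                (if t ∉ Ahat xs then W xs else 0) :=
          Finset.single_le_sum (f := fun t => if t ∉ Ahat xs then W xs else 0)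
            (fun _ _ => zero_le) (by simp [htS])
        simp only [htnot, not_false_iff, if_true] at hle
        split
        · exact hle
        · exact zero_le
    have hstep2 : ∀ t ∈ Finset.univ.filter (fun t : T => t ∈ S),
        ∑' xs : Fin n₀ → Fin 1 → X, (if t ∉ Ahat xs then W xs else 0)
          ≤ ENNReal.ofReal (δ / (k + 1)) := by
      intro t ht
      have htS : t ∈ S := by simpa using ht
      -- factor the event across coordinates
      have hfac : ∑' xs : Fin n₀ → Fin 1 → X, (if t ∉ Ahat xs then W xs else 0)
          = ∏ i : Fin n₀, ∑' x, (if t ∉ A x then (D (i.1 + 1) x : ℝ≥0∞) else 0) := by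
        rw [← tsum_pi1_prod n₀ (fun i x => if t ∉ A x then (D (i.1 + 1) x : ℝ≥0∞) else 0)]
        refine tsum_congr fun xs => ?_
        by_cases h : t ∉ Ahat xs
        · have hnot : ∀ i j, t ∉ A (xs i j) := by
            intro i j hmem
            exact h (Finset.mem_biUnion.mpr ⟨i, Finset.mem_univ i,
              Finset.mem_biUnion.mpr ⟨j, Finset.mem_univ j, hmem⟩⟩)
          rw [if_pos h, hWdef]
          exact Finset.prod_congr rfl fun i _ => Finset.prod_congr rfl fun j _ => by
            simp [hnot i j]
        · rw [if_neg h]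
          push_neg at h
          rw [hAhatdef] at h
          simp only [Finset.mem_biUnion, Finset.mem_univ, true_and] at h
          obtain ⟨i, j, hij⟩ := h
          refine (Finset.prod_eq_zero (Finset.mem_univ i) ?_).symm
          refine Finset.prod_eq_zero (Finset.mem_univ j) ?_
          simp [hij]
      rw [hfac]
      -- the set of hit coordinates
      set H : Finset (Fin n₀) := Finset.univ.filter (fun i : Fin n₀ => c' ≤ p (i.1 + 1) t)
        with hHdef
      have hq1 : ∀ i : Fin n₀, ∑' x, (if t ∉ A x then (D (i.1 + 1) x : ℝ≥0∞) else 0) ≤ 1 := by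
        intro i
        calc ∑' x, (if t ∉ A x then (D (i.1 + 1) x : ℝ≥0∞) else 0) ≤ ∑' x, D (i.1 + 1) x := by
              refine Summable.tsum_le_tsum (fun x => ?_) ENNReal.summable ENNReal.summable
              split <;> simp
          _ = 1 := (D (i.1 + 1)).tsum_coe
      have hqH : ∀ i ∈ H, ∑' x, (if t ∉ A x then (D (i.1 + 1) x : ℝ≥0∞) else 0)
          ≤ ENNReal.ofReal (1 - c) := by
        intro i hi
        have hip : c' ≤ p (i.1 + 1) t := by
          rw [hHdef] at hi; simpa using hi
        have hsum : p (i.1 + 1) t + ∑' x, (if t ∉ A x then (D (i.1 + 1) x : ℝ≥0∞) else 0)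
            = 1 := by
          simp only [hpdef]
          rw [← ENNReal.tsum_add, ← (D (i.1 + 1)).tsum_coe]
          exact tsum_congr fun x => by by_cases hx : t ∈ A x <;> simp [hx]
        have hqeq : ∑' x, (if t ∉ A x then (D (i.1 + 1) x : ℝ≥0∞) else 0)
            = 1 - p (i.1 + 1) t := by
          refine ENNReal.eq_sub_of_add_eq ?_ ?_
          · exact ne_top_of_le_ne_top ENNReal.one_ne_top (hple _ t)
          · rw [add_comm]; exact hsum
        rw [hqeq]
        calc 1 - p (i.1 + 1) t ≤ 1 - c' := tsub_le_tsub_left hip 1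
          _ = ENNReal.ofReal (1 - c) := by
              rw [hc'def, ENNReal.ofReal_sub 1 hc0.le, ENNReal.ofReal_one]
      -- at least K hit coordinates
      have hn₀pos : 0 < n₀ := lt_of_lt_of_le (Nat.succ_pos _) (le_max_left _ _)
      have hKcard : K ≤ H.card := by
        rw [← (hF t htS).2]
        have hlt : ∀ n ∈ F t, n < n₀ := by
          intro n hnF
          have h1 : n ≤ (F t).sup id := Finset.le_sup (f := id) hnF
          have h2 : (F t).sup id ≤ Finset.univ.sup (fun t => (F t).sup id) :=
            Finset.le_sup (f := fun t => (F t).sup id) (Finset.mem_univ t)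
          have h3 : (Finset.univ.sup fun t => (F t).sup id) + 1 ≤ n₀ := le_max_right _ _
          omega
        refine Finset.card_le_card_of_injOn
          (fun n => (⟨n % n₀, Nat.mod_lt _ hn₀pos⟩ : Fin n₀)) ?_ ?_
        · intro n hnF
          rw [hHdef]
          simp only [Finset.mem_filter, Finset.mem_univ, true_and]
          have : n % n₀ = n := Nat.mod_eq_of_lt (hlt n hnF)
          simp only [Finset.coe_filter, Finset.mem_univ, true_and, Set.mem_setOf_eq, this]
          exact (hF t htS).1 hnF
        · intro a ha b hb hab
          have h1 : a % n₀ = b % n₀ := congrArg Fin.val hab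
          rwa [Nat.mod_eq_of_lt (hlt a ha), Nat.mod_eq_of_lt (hlt b hb)] at h1
      -- product bound
      calc ∏ i : Fin n₀, ∑' x, (if t ∉ A x then (D (i.1 + 1) x : ℝ≥0∞) else 0)
          = (∏ i ∈ H, ∑' x, (if t ∉ A x then (D (i.1 + 1) x : ℝ≥0∞) else 0)) *
            ∏ i ∈ Hᶜ, ∑' x, (if t ∉ A x then (D (i.1 + 1) x : ℝ≥0∞) else 0) :=
            (Finset.prod_mul_prod_compl H _).symm
        _ ≤ (∏ _i ∈ H, ENNReal.ofReal (1 - c)) * 1 :=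
            mul_le_mul' (Finset.prod_le_prod' hqH) (Finset.prod_le_one (fun i _ => zero_le) (fun i _ => hq1 i))
        _ = ENNReal.ofReal (1 - c) ^ H.card := by rw [mul_one, Finset.prod_const]
        _ = ENNReal.ofReal ((1 - c) ^ H.card) := (ENNReal.ofReal_pow (by linarith) _).symm
        _ ≤ ENNReal.ofReal (δ / (k + 1)) := by
            refine ENNReal.ofReal_le_ofReal ?_
            calc (1 - c) ^ H.card ≤ (1 - c) ^ K :=
                  pow_le_pow_of_le_one (by linarith) (by linarith) hKcard
              _ ≤ δ / (k + 1) := hK.le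
    calc ∑' xs : Fin n₀ → Fin 1 → X, (if ¬ ∀ t ∈ S, t ∈ Ahat xs then W xs else 0)
        ≤ ∑ t ∈ Finset.univ.filter (fun t : T => t ∈ S),
            ∑' xs : Fin n₀ → Fin 1 → X, (if t ∉ Ahat xs then W xs else 0) := hstep1
      _ ≤ ∑ _t ∈ Finset.univ.filter (fun t : T => t ∈ S), ENNReal.ofReal (δ / (k + 1)) :=
          Finset.sum_le_sum hstep2
      _ = (Finset.univ.filter (fun t : T => t ∈ S)).card • ENNReal.ofReal (δ / (k + 1)) :=
          (Finset.sum_const _)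
      _ ≤ (k : ℝ≥0∞) * ENNReal.ofReal (δ / (k + 1)) := by
          rw [nsmul_eq_mul]
          refine mul_le_mul_left ?_ _
          exact_mod_cast (by simpa using Finset.card_filter_le Finset.univ (fun t : T => t ∈ S))
      _ = ENNReal.ofReal (k * (δ / (k + 1))) := by
          rw [ENNReal.ofReal_mul (by positivity)]
          simp
      _ ≤ ENNReal.ofReal δ := by
          refine ENNReal.ofReal_le_ofReal ?_
          rw [mul_div_assoc', div_le_iff₀ (by positivity)]
          nlinarith
  -- conclude
  have hgoodbad : (∑' xs : Fin n₀ → Fin 1 → X, (if ∀ t ∈ S, t ∈ Ahat xs then W xs else 0)) +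
      ∑' xs : Fin n₀ → Fin 1 → X, (if ¬ ∀ t ∈ S, t ∈ Ahat xs then W xs else 0) = 1 := by
    rw [← ENNReal.tsum_add, ← htot]
    refine tsum_congr fun xs => ?_
    by_cases h : ∀ t ∈ S, t ∈ Ahat xs
    · rw [if_pos h, if_neg (not_not_intro h), add_zero]
    · rw [if_neg h, if_pos h, zero_add]
  have hbadtop : ∑' xs : Fin n₀ → Fin 1 → X, (if ¬ ∀ t ∈ S, t ∈ Ahat xs then W xs else 0) ≠ ∞ :=
    ne_top_of_le_ne_top ENNReal.ofReal_ne_top hbad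
  refine le_trans ?_ hmono
  refine ENNReal.le_of_add_le_add_right hbadtop ?_
  rw [hgoodbad]
  calc ENNReal.ofReal (1 - δ) +
      ∑' xs : Fin n₀ → Fin 1 → X, (if ¬ ∀ t ∈ S, t ∈ Ahat xs then W xs else 0)
      ≤ ENNReal.ofReal (1 - δ) + ENNReal.ofReal δ := add_le_add_right hbad _
    _ = ENNReal.ofReal 1 := by rw [← ENNReal.ofReal_add (by linarith) (by linarith)]; norm_num
    _ = 1 := ENNReal.ofReal_one
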